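/- The set {c ∈ ℚ : there exists y ∈ ℚ with y² = c² + 8} is infinite; consequently, the set of c ∈ ℚ for which the map z ↦ z² + 2/(c² + 8) has a rational fixed point (hence an affine rational preperiodic point) is infinite. -/

import Mathlib

/-- The set of rational `c` with `c² + 8` a rational square is infinite;
consequently, the set of `c ∈ ℚ` for which `z ↦ z² + 2/(c² + 8)` has a rational fixed
point is infinite. -/
theorem infinitely_many_with_fixed_point :
    {c : ℚ | ∃ y : ℚ, y ^ 2 = c ^ 2 + 8}.Infinite ∧
    {c : ℚ | ∃ x : ℚ, x ^ 2 + 2 / (c ^ 2 + 8) = x}.Infinite := by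
  have h1 : {c : ℚ | ∃ y : ℚ, y ^ 2 = c ^ 2 + 8}.Infinite := by
    apply Set.infinite_of_injective_forall_mem
      (f := fun n : ℕ => ((n : ℚ) + 1) - 2 / ((n : ℚ) + 1))
    · intro m n h
      simp only at h
      have hm : (m : ℚ) + 1 > 0 := by positivity
      have hn : (n : ℚ) + 1 > 0 := by positivity
      have : (m : ℚ) = n := by
        field_simp at h
        nlinarith [sq_nonneg ((m:ℚ) - n), sq_nonneg ((m:ℚ) + n)]
      exact_mod_cast this
    · intro n
      refine ⟨((n : ℚ) + 1) + 2 / ((n : ℚ) + 1), ?_⟩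
      have hn : (n : ℚ) + 1 ≠ 0 := by positivity
      field_simp
      ring
  refine ⟨h1, h1.mono ?_⟩
  intro c ⟨y, hy⟩
  have h8 : c ^ 2 + 8 > 0 := by positivity
  have hy0 : y ≠ 0 := by
    intro h; rw [h] at hy; simp at hy; nlinarith
  refine ⟨(y + c) / (2 * y), ?_⟩
  rw [← hy]
  field_simp
  linear_combination (-1) * hy
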